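/- Let ε ∈ (0,1) and let f(ε) := 1 + Σ_{k=1}^{∞} ((Π_{m=1}^{k}(m − 1/2))/(k+1)!)·ε^k (the series for d = 2). Then the bracketing number of the family C_2 of anchored boxes in [0,1]^2 satisfies N_[](ε, C_2, ‖·‖_{L¹}) ≤ 2·((ε^{−1} − 1)/f(ε) + 3/2)·((ε^{−1} − 1)/f(ε) + 1). -/

import Mathlib

open Finset

/-- `B` is an `ε`-bracketing cover of the family `C_d` of anchored boxes in `[0,1]^d`:
a finite set of pairs `(a, b)` of points of `[0,1]^d` with `a ≤ b` componentwise and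
`∏ b_j - ∏ a_j ≤ ε` (i.e. the bracket `[1_{[0,a)}, 1_{[0,b)}]` has `L¹`-weight at most
`ε`), such that every anchored box `[0,x)` with `x ∈ [0,1]^d` satisfies
`a ≤ x ≤ b` componentwise for some `(a, b) ∈ B`. -/
def IsBracketingCoverC (d : ℕ) (ε : ℝ)
    (B : Finset ((Fin d → ℝ) × (Fin d → ℝ))) : Prop :=
  (∀ p ∈ B, p.1 ∈ Set.Icc (0 : Fin d → ℝ) 1 ∧ p.2 ∈ Set.Icc (0 : Fin d → ℝ) 1 ∧
    p.1 ≤ p.2 ∧ (∏ j, p.2 j) - ∏ j, p.1 j ≤ ε) ∧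
  ∀ x ∈ Set.Icc (0 : Fin d → ℝ) 1, ∃ p ∈ B, p.1 ≤ x ∧ x ≤ p.2

/-- The bracketing number `N_[](ε, C_d, ‖·‖_{L¹})` of the family of anchored boxes:
the minimal cardinality of an `ε`-bracketing cover of `C_d`. -/
noncomputable def bracketingNumberC (d : ℕ) (ε : ℝ) : ℕ :=
  sInf { n : ℕ | ∃ B : Finset ((Fin d → ℝ) × (Fin d → ℝ)),
    IsBracketingCoverC d ε B ∧ B.card = n }


namespace BrkAux

noncomputable def useq (c r : ℝ) (i : ℕ) : ℝ := c - (c - 1) * r ^ i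

noncomputable def strip (ε T T' : ℝ) (m : ℕ) : Finset ((Fin 2 → ℝ) × (Fin 2 → ℝ)) :=
  (Finset.range m).image fun i =>
    (![max (useq (ε / (T' - T)) (T' / T) (i + 1)) 0, T],
     ![max (useq (ε / (T' - T)) (T' / T) i) 0, T'])

lemma vec_le_iff (a b : ℝ) (x : Fin 2 → ℝ) : (![a, b] ≤ x) ↔ a ≤ x 0 ∧ b ≤ x 1 := by
  constructor
  · intro h; exact ⟨h 0, h 1⟩
  · intro ⟨h1, h2⟩ i
    fin_cases i <;> simpa

lemma le_vec_iff (a b : ℝ) (x : Fin 2 → ℝ) : (x ≤ ![a, b]) ↔ x 0 ≤ a ∧ x 1 ≤ b := by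
  constructor
  · intro h; exact ⟨h 0, h 1⟩
  · intro ⟨h1, h2⟩ i
    fin_cases i <;> simpa

lemma mem_Icc01 (x : Fin 2 → ℝ) :
    x ∈ Set.Icc (0 : Fin 2 → ℝ) 1 ↔ (0 ≤ x 0 ∧ 0 ≤ x 1) ∧ x 0 ≤ 1 ∧ x 1 ≤ 1 := by
  constructor
  · intro ⟨h0, h1⟩
    exact ⟨⟨h0 0, h0 1⟩, h1 0, h1 1⟩
  · intro ⟨⟨h0, h1⟩, h2, h3⟩
    constructor
    · intro i; fin_cases i <;> simpa
    · intro i; fin_cases i <;> simpa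

lemma strip_spec (ε T T' : ℝ) (m : ℕ) (hε : 0 < ε) (hT : 0 < T) (hlt : T < T')
    (hle1 : T' ≤ 1) (hm : 1 ≤ m) (hfeas : ε ≤ (T' / T) ^ m * (ε - (T' - T))) :
    (∀ p ∈ strip ε T T' m, p.1 ∈ Set.Icc (0 : Fin 2 → ℝ) 1 ∧
      p.2 ∈ Set.Icc (0 : Fin 2 → ℝ) 1 ∧ p.1 ≤ p.2 ∧ (∏ j, p.2 j) - ∏ j, p.1 j ≤ ε) ∧
    (∀ x : Fin 2 → ℝ, x ∈ Set.Icc (0 : Fin 2 → ℝ) 1 → T ≤ x 1 → x 1 ≤ T' →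
      ∃ p ∈ strip ε T T' m, p.1 ≤ x ∧ x ≤ p.2) ∧
    (strip ε T T' m).card ≤ m := by
  classical
  set h : ℝ := T' - T with hh_def
  set c : ℝ := ε / h with hc_def
  set r : ℝ := T' / T with hr_def
  have hcr : ε / (T' - T) = c := rfl
  have hrr : T' / T = r := rfl
  have hh : 0 < h := by rw [hh_def]; linarith
  have hT' : 0 < T' := lt_trans hT hlt
  have hr1 : 1 < r := (one_lt_div hT).mpr hlt
  have hrpos : 0 < r := lt_trans one_pos hr1
  have hεh : h < ε := by
    by_contra hcon
    push_neg at hcon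
    have h1 : r ^ m * (ε - h) ≤ 0 :=
      mul_nonpos_of_nonneg_of_nonpos (by positivity) (by linarith)
    linarith [hfeas]
  have hc1 : 1 < c := (one_lt_div hh).mpr hεh
  have hu0 : useq c r 0 = 1 := by simp [useq]
  have humono : ∀ i j : ℕ, i ≤ j → useq c r j ≤ useq c r i := by
    intro i j hij
    have h1 := pow_le_pow_right₀ (le_of_lt hr1) hij
    have hcm : (0:ℝ) ≤ c - 1 := by linarith
    simp only [useq]
    nlinarith [mul_le_mul_of_nonneg_left h1 hcm]
  have hule1 : ∀ i, useq c r i ≤ 1 := by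
    intro i
    have := humono 0 i (Nat.zero_le i)
    rwa [hu0] at this
  have hch : c * h = ε := by rw [hc_def]; field_simp
  have h3 : (c - 1) * h = ε - h := by rw [hc_def]; field_simp
  have hum : useq c r m ≤ 0 := by
    have h2 : (c - (c - 1) * r ^ m) * h = ε - r ^ m * (ε - h) := by
      calc (c - (c - 1) * r ^ m) * h = c * h - r ^ m * ((c - 1) * h) := by ring
        _ = ε - r ^ m * (ε - h) := by rw [hch, h3]
    have h4 : (c - (c - 1) * r ^ m) * h ≤ 0 := by rw [h2]; linarith [hfeas]
    simp only [useq]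
    by_contra hcon
    push_neg at hcon
    nlinarith [mul_pos hcon hh]
  have hrT : r * T = T' := by rw [hr_def]; field_simp
  have hstep : ∀ i : ℕ, useq c r i * T' - useq c r (i + 1) * T = ε := by
    intro i
    have h1 : r ^ (i + 1) * T = r ^ i * T' := by
      rw [pow_succ, mul_assoc, hrT]
    simp only [useq]
    calc (c - (c - 1) * r ^ i) * T' - (c - (c - 1) * r ^ (i + 1)) * T
        = c * (T' - T) - (c - 1) * (r ^ i * T') + (c - 1) * (r ^ (i + 1) * T) := by ring
      _ = c * h := by rw [h1, hh_def]; ring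
      _ = ε := hch
  refine ⟨?_, ?_, ?_⟩
  · -- validity
    intro p hp
    simp only [strip, Finset.mem_image, Finset.mem_range, hcr, hrr] at hp
    obtain ⟨i, hi, rfl⟩ := hp
    have hub1 : max (useq c r (i+1)) 0 ≤ 1 := max_le (hule1 _) zero_le_one
    have hub0 : max (useq c r i) 0 ≤ 1 := max_le (hule1 _) zero_le_one
    refine ⟨?_, ?_, ?_, ?_⟩
    · rw [mem_Icc01]
      simp only [Matrix.cons_val_zero, Matrix.cons_val_one, Matrix.head_cons]
      exact ⟨⟨le_max_right _ _, le_of_lt hT⟩, hub1, by linarith⟩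
    · rw [mem_Icc01]
      simp only [Matrix.cons_val_zero, Matrix.cons_val_one, Matrix.head_cons]
      exact ⟨⟨le_max_right _ _, by linarith⟩, hub0, hle1⟩
    · rw [vec_le_iff]
      simp only [Matrix.cons_val_zero, Matrix.cons_val_one, Matrix.head_cons]
      exact ⟨max_le_max (humono i (i+1) (Nat.le_succ i)) le_rfl, le_of_lt hlt⟩
    · rw [Fin.prod_univ_two, Fin.prod_univ_two]
      simp only [Matrix.cons_val_zero, Matrix.cons_val_one, Matrix.head_cons]
      rcases le_or_gt 0 (useq c r (i+1)) with hpos | hneg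
      · rw [max_eq_left hpos,
          max_eq_left (le_trans hpos (humono i (i+1) (Nat.le_succ i)))]
        rw [hstep i]
      · rw [max_eq_right (le_of_lt hneg), zero_mul, sub_zero]
        rcases le_or_gt (useq c r i) 0 with hneg2 | hpos2
        · rw [max_eq_right hneg2, zero_mul]; linarith
        · rw [max_eq_left (le_of_lt hpos2)]
          have := hstep i
          nlinarith
  · -- coverage
    intro x hx hx1 hx1'
    rw [mem_Icc01] at hx
    obtain ⟨⟨hx00, hx01⟩, hx10, hx11⟩ := hx
    have hwit : max (useq c r (m - 1 + 1)) 0 ≤ x 0 := by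
      rw [Nat.sub_add_cancel hm, max_eq_right hum]
      exact hx00
    have hex : ∃ n : ℕ, max (useq c r (n + 1)) 0 ≤ x 0 := ⟨m - 1, hwit⟩
    have hispec : max (useq c r (Nat.find hex + 1)) 0 ≤ x 0 := Nat.find_spec hex
    have him : Nat.find hex < m := by
      have h5 : Nat.find hex ≤ m - 1 := Nat.find_le hwit
      omega
    refine ⟨(![max (useq c r (Nat.find hex + 1)) 0, T],
        ![max (useq c r (Nat.find hex)) 0, T']), ?_, ?_, ?_⟩
    · simp only [strip, Finset.mem_image, Finset.mem_range, hcr, hrr]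
      exact ⟨Nat.find hex, him, rfl⟩
    · rw [vec_le_iff]
      exact ⟨hispec, hx1⟩
    · rw [le_vec_iff]
      refine ⟨?_, hx1'⟩
      rcases Nat.eq_zero_or_pos (Nat.find hex) with h0 | hpos
      · rw [h0, hu0, max_eq_left zero_le_one]
        exact hx10
      · have hlt' : Nat.find hex - 1 < Nat.find hex := Nat.pred_lt (Nat.pos_iff_ne_zero.mp hpos)
        have hmin := Nat.find_min hex hlt'
        push_neg at hmin
        rw [Nat.sub_add_cancel hpos] at hmin
        exact le_of_lt hmin
  · calc (strip ε T T' m).card ≤ (Finset.range m).card := Finset.card_image_le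
      _ = m := Finset.card_range m


noncomputable def layered (ε : ℝ) (K : ℕ) (T : ℕ → ℝ) :
    Finset ((Fin 2 → ℝ) × (Fin 2 → ℝ)) :=
  (Finset.range K).biUnion fun ν =>
    if ν = 0 then {(![0, 0], ![1, T 1])} else strip ε (T ν) (T (ν + 1)) (ν + 1)

lemma layered_spec (ε : ℝ) (hε : 0 < ε) (K : ℕ) (hK : 1 ≤ K) (T : ℕ → ℝ)
    (hT0 : T 0 = 0) (hTK : T K = 1) (hmono : ∀ ν < K, T ν < T (ν + 1))
    (hT1 : T 1 ≤ ε)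
    (hfeas : ∀ ν, 1 ≤ ν → ν < K →
      ε ≤ (T (ν + 1) / T ν) ^ (ν + 1) * (ε - (T (ν + 1) - T ν))) :
    bracketingNumberC 2 ε ≤ ∑ ν ∈ Finset.range K, (ν + 1) := by
  classical
  -- monotonicity facts
  have hchain : ∀ j, j ≤ K → ∀ i, i ≤ j → T i ≤ T j := by
    intro j
    induction j with
    | zero => intro _ i hi; interval_cases i; exact le_rfl
    | succ n ih =>
      intro hj i hi
      rcases Nat.lt_succ_iff_lt_or_eq.mp (Nat.lt_succ_of_le hi) with hlt | heq
      · exact le_trans (ih (by omega) i (by omega))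
          (le_of_lt (hmono n (by omega)))
      · rw [heq]
    -- done
  have hpos : ∀ ν, 1 ≤ ν → ν ≤ K → 0 < T ν := by
    intro ν h1 h2
    have := hmono 0 (by omega)
    have h4 : T 1 ≤ T ν := hchain ν h2 1 h1
    rw [hT0] at this
    linarith
  have hle1 : ∀ ν, ν ≤ K → T ν ≤ 1 := by
    intro ν hν
    have := hchain K le_rfl ν hν
    rwa [hTK] at this
  -- validity of each strip
  have hstripspec : ∀ ν, 1 ≤ ν → ν < K → _ := fun ν h1 h2 =>
    strip_spec ε (T ν) (T (ν + 1)) (ν + 1) hε (hpos ν h1 (le_of_lt h2))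
      (hmono ν h2) (hle1 (ν + 1) h2) (by omega) (hfeas ν h1 h2)
  have hT1pos : 0 < T 1 := hpos 1 le_rfl hK
  have hcover : IsBracketingCoverC 2 ε (layered ε K T) := by
    constructor
    · intro p hp
      rw [layered, Finset.mem_biUnion] at hp
      obtain ⟨ν, hν, hp⟩ := hp
      rw [Finset.mem_range] at hν
      by_cases h0 : ν = 0
      · rw [h0, if_pos rfl, Finset.mem_singleton] at hp
        subst hp
        refine ⟨?_, ?_, ?_, ?_⟩
        · rw [mem_Icc01]; norm_num
        · rw [mem_Icc01]
          simp only [Matrix.cons_val_zero, Matrix.cons_val_one, Matrix.head_cons]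
          refine ⟨⟨zero_le_one, le_of_lt hT1pos⟩, le_rfl, hle1 1 hK⟩
        · rw [vec_le_iff]
          simp only [Matrix.cons_val_zero, Matrix.cons_val_one, Matrix.head_cons]
          exact ⟨zero_le_one, le_of_lt hT1pos⟩
        · rw [Fin.prod_univ_two, Fin.prod_univ_two]
          simp only [Matrix.cons_val_zero, Matrix.cons_val_one, Matrix.head_cons]
          rw [one_mul, zero_mul, sub_zero]
          exact hT1
      · rw [if_neg h0] at hp
        exact (hstripspec ν (by omega) hν).1 p hp
    · intro x hx
      -- find the layer
      have hx' := hx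
      rw [mem_Icc01] at hx'
      obtain ⟨⟨hx00, hx01⟩, hx10, hx11⟩ := hx'
      set S : Finset ℕ := (Finset.range K).filter (fun ν => T ν ≤ x 1) with hS_def
      have h0S : 0 ∈ S := by
        rw [hS_def, Finset.mem_filter, Finset.mem_range]
        exact ⟨by omega, by rw [hT0]; exact hx01⟩
      have hSne : S.Nonempty := ⟨0, h0S⟩
      set ν := S.max' hSne with hν_def
      have hνS : ν ∈ S := S.max'_mem hSne
      rw [hS_def, Finset.mem_filter, Finset.mem_range] at hνS
      obtain ⟨hνK, hνle⟩ := hνS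
      have hup : x 1 ≤ T (ν + 1) := by
        rcases Nat.lt_or_ge (ν + 1) K with hlt | hge
        · by_contra hcon
          push_neg at hcon
          have : ν + 1 ∈ S := by
            rw [hS_def, Finset.mem_filter, Finset.mem_range]
            exact ⟨hlt, le_of_lt hcon⟩
          have := S.le_max' _ this
          omega
        · have : ν + 1 = K := by omega
          rw [this, hTK]
          exact hx11
      by_cases h0 : ν = 0
      · refine ⟨(![0, 0], ![1, T 1]), ?_, ?_, ?_⟩
        · rw [layered, Finset.mem_biUnion]
          exact ⟨0, by rw [Finset.mem_range]; omega, by rw [if_pos rfl]; exact Finset.mem_singleton_self _⟩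
        · rw [vec_le_iff]; exact ⟨hx00, hx01⟩
        · rw [le_vec_iff]
          refine ⟨hx10, ?_⟩
          rw [h0] at hup
          exact hup
      · obtain ⟨p, hp, hple⟩ := (hstripspec ν (by omega) hνK).2.1 x hx hνle hup
        refine ⟨p, ?_, hple⟩
        rw [layered, Finset.mem_biUnion]
        exact ⟨ν, by rw [Finset.mem_range]; omega, by rw [if_neg h0]; exact hp⟩
  -- cardinality
  have hcard : (layered ε K T).card ≤ ∑ ν ∈ Finset.range K, (ν + 1) := by
    refine le_trans (Finset.card_biUnion_le) (Finset.sum_le_sum ?_)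
    intro ν hν
    rw [Finset.mem_range] at hν
    by_cases h0 : ν = 0
    · rw [h0, if_pos rfl]; simp
    · rw [if_neg h0]
      exact (hstripspec ν (by omega) hν).2.2
  have hmem : (layered ε K T).card ∈ { n : ℕ | ∃ B : Finset ((Fin 2 → ℝ) × (Fin 2 → ℝ)),
      IsBracketingCoverC 2 ε B ∧ B.card = n } := ⟨layered ε K T, hcover, rfl⟩
  exact le_trans (Nat.sInf_le hmem) hcard


noncomputable def dd (k : ℕ) : ℝ :=
  (∏ m ∈ Icc 1 (k + 1), ((m : ℝ) - 1 / 2)) / (Nat.factorial (k + 2))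

lemma dd_nonneg (k : ℕ) : 0 ≤ dd k := by
  apply div_nonneg
  · apply Finset.prod_nonneg
    intro m hm
    rw [Finset.mem_Icc] at hm
    have : (1 : ℝ) ≤ (m : ℝ) := by exact_mod_cast hm.1
    linarith
  · positivity

lemma dd_zero : dd 0 = 1 / 4 := by
  norm_num [dd, Nat.factorial]

lemma dd_succ (k : ℕ) : dd (k + 1) = dd k * ((k + 2 : ℝ) - 1 / 2) / (k + 3) := by
  rw [dd, dd]
  have h1 := Finset.prod_Icc_succ_top (show 1 ≤ k + 1 + 1 by omega)
    (fun m : ℕ => ((m : ℝ) - 1 / 2))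
  rw [h1]
  push_cast
  have h2 : (Nat.factorial (k + 1 + 2) : ℝ) = (k + 3 : ℝ) * (Nat.factorial (k + 2)) := by
    rw [show k + 1 + 2 = (k + 2) + 1 by omega, Nat.factorial_succ]
    push_cast
    ring
  rw [h2]
  have h3 : (0:ℝ) < (Nat.factorial (k+2) : ℝ) := by positivity
  field_simp
  ring

lemma dd_le_quarter (k : ℕ) : dd k ≤ 1 / 4 := by
  induction k with
  | zero => rw [dd_zero]
  | succ n ih =>
    rw [dd_succ]
    have h1 : ((n:ℝ) + 2 - 1/2) / (n + 3) ≤ 1 := by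
      rw [div_le_one (by positivity)]
      linarith
    calc dd n * ((n + 2 : ℝ) - 1/2) / (n + 3) = dd n * (((n:ℝ) + 2 - 1/2)/(n+3)) := by ring
      _ ≤ dd n * 1 := by
          apply mul_le_mul_of_nonneg_left h1 (dd_nonneg n)
      _ ≤ 1/4 := by rw [mul_one]; exact ih

lemma dd_succ_le_eighth (k : ℕ) : dd (k + 1) ≤ 1 / 8 := by
  induction k with
  | zero =>
    rw [dd_succ, dd_zero]
    norm_num
  | succ n ih =>
    rw [dd_succ (n+1)]
    have h1 : ((n:ℝ) + 1 + 2 - 1/2) / (n + 1 + 3) ≤ 1 := by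
      rw [div_le_one (by positivity)]
      push_cast
      linarith
    calc dd (n+1) * ((↑(n+1) + 2 : ℝ) - 1/2) / (↑(n+1) + 3)
        = dd (n+1) * (((n:ℝ) + 1 + 2 - 1/2)/((n:ℝ) + 1 + 3)) := by push_cast; ring
      _ ≤ dd (n+1) * 1 := by
          apply mul_le_mul_of_nonneg_left h1 (dd_nonneg (n+1))
      _ ≤ 1/8 := by rw [mul_one]; exact ih

lemma fsum_bounds (ε : ℝ) (hε0 : 0 < ε) (hε1 : ε < 1) :
    0 ≤ ∑' k : ℕ, dd k * ε ^ (k + 1) ∧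
    ∑' k : ℕ, dd k * ε ^ (k + 1) ≤ ε / 4 + ε ^ 2 / (8 * (1 - ε)) := by
  have hgnn : ∀ k : ℕ, 0 ≤ dd k * ε ^ (k + 1) := fun k =>
    mul_nonneg (dd_nonneg k) (by positivity)
  have hgle : ∀ k : ℕ, dd k * ε ^ (k + 1) ≤ (1/4) * ε ^ k := by
    intro k
    have h1 : ε ^ (k+1) ≤ ε ^ k := pow_le_pow_of_le_one (le_of_lt hε0) (le_of_lt hε1) (Nat.le_succ k)
    have h2 : dd k * ε ^ (k+1) ≤ (1/4) * ε ^ (k+1) :=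
      mul_le_mul_of_nonneg_right (dd_le_quarter k) (by positivity)
    calc dd k * ε ^ (k+1) ≤ (1/4) * ε ^ (k+1) := h2
      _ ≤ (1/4) * ε ^ k := by nlinarith
  have hgeo : Summable (fun k : ℕ => (1/4 : ℝ) * ε ^ k) :=
    (summable_geometric_of_lt_one (le_of_lt hε0) hε1).mul_left _
  have hsum : Summable (fun k : ℕ => dd k * ε ^ (k + 1)) :=
    Summable.of_nonneg_of_le hgnn hgle hgeo
  constructor
  · exact tsum_nonneg hgnn
  · have hsum1 : Summable (fun k : ℕ => dd (k + 1) * ε ^ (k + 1 + 1)) :=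
      (summable_nat_add_iff (f := fun k : ℕ => dd k * ε ^ (k + 1)) 1).mpr hsum
    have hgeo2 : Summable (fun k : ℕ => (1/8 : ℝ) * ε ^ 2 * ε ^ k) :=
      (summable_geometric_of_lt_one (le_of_lt hε0) hε1).mul_left _
    have hterm : ∀ k : ℕ, dd (k + 1) * ε ^ (k + 1 + 1) ≤ (1/8) * ε ^ 2 * ε ^ k := by
      intro k
      have h1 : dd (k+1) * ε ^ (k+1+1) ≤ (1/8) * ε ^ (k+1+1) :=
        mul_le_mul_of_nonneg_right (dd_succ_le_eighth k) (by positivity)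
      calc dd (k+1) * ε ^ (k+1+1) ≤ (1/8) * ε ^ (k+1+1) := h1
        _ = (1/8) * ε^2 * ε^k := by ring
    have htail : ∑' k : ℕ, dd (k + 1) * ε ^ (k + 1 + 1) ≤ ∑' k : ℕ, (1/8 : ℝ) * ε ^ 2 * ε ^ k :=
      Summable.tsum_le_tsum hterm hsum1 hgeo2
    have hgeosum : ∑' k : ℕ, (1/8 : ℝ) * ε ^ 2 * ε ^ k = (1/8) * ε^2 * (1 - ε)⁻¹ := by
      rw [tsum_mul_left, tsum_geometric_of_lt_one (le_of_lt hε0) hε1]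
    have hsplit : ∑' k : ℕ, dd k * ε ^ (k + 1)
        = dd 0 * ε ^ (0 + 1) + ∑' k : ℕ, dd (k + 1) * ε ^ (k + 1 + 1) :=
      Summable.tsum_eq_zero_add hsum
    have hg0 : dd 0 * ε ^ (0 + 1) = ε / 4 := by rw [dd_zero]; ring
    have h9 : (1 - ε) ≠ 0 := by intro hb; nlinarith
    have hfinal : (1/8 : ℝ) * ε^2 * (1-ε)⁻¹ = ε^2 / (8 * (1 - ε)) := by
      field_simp
    rw [hsplit, hg0]
    rw [hgeosum, hfinal] at htail
    linarith


lemma ratio_pow (ν : ℕ) (hν : 1 ≤ ν) : (8/3 : ℝ) ≤ (((ν:ℝ) + 1) / ν) ^ (ν + 1) := by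
  have hν0 : (0:ℝ) < ν := by exact_mod_cast hν
  have h1 : 1 - 1/((ν:ℝ)+1) ≤ Real.exp (-(1/((ν:ℝ)+1))) := by
    have := Real.add_one_le_exp (-(1/((ν:ℝ)+1)))
    linarith
  have h2 : (1:ℝ) - 1/((ν:ℝ)+1) = (ν:ℝ)/((ν:ℝ)+1) := by field_simp; ring
  rw [h2, Real.exp_neg] at h1
  have h3 : (0:ℝ) < (ν:ℝ)/((ν:ℝ)+1) := by positivity
  have h4 : Real.exp (1/((ν:ℝ)+1)) ≤ (((ν:ℝ))/((ν:ℝ)+1))⁻¹ := by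
    have := inv_anti₀ h3 h1
    rwa [inv_inv] at this
  rw [inv_div] at h4
  have h5 : (Real.exp (1/((ν:ℝ)+1))) ^ (ν+1) ≤ (((ν:ℝ)+1)/ν) ^ (ν+1) := by
    apply pow_le_pow_left₀ (le_of_lt (Real.exp_pos _)) h4
  have h6 : (Real.exp (1/((ν:ℝ)+1))) ^ (ν+1) = Real.exp 1 := by
    rw [← Real.exp_nat_mul]
    congr 1
    have : ((ν:ℝ)+1) ≠ 0 := by positivity
    push_cast
    field_simp
  rw [h6] at h5
  have h7 : (8/3 : ℝ) ≤ Real.exp 1 := by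
    have := Real.exp_one_gt_d9
    linarith
  linarith

lemma gauss (K : ℕ) : 2 * (∑ ν ∈ Finset.range K, (ν + 1)) = K * (K + 1) := by
  induction K with
  | zero => simp
  | succ n ih =>
    calc 2 * (∑ ν ∈ Finset.range (n+1), (ν + 1))
        = 2 * (∑ ν ∈ Finset.range n, (ν + 1)) + 2 * (n + 1) := by
          rw [Finset.sum_range_succ]; ring
      _ = n * (n + 1) + 2 * (n + 1) := by rw [ih]
      _ = (n + 1) * (n + 1 + 1) := by ring

lemma count_vs_rhs (K : ℕ) (A : ℝ) (hA : 0 ≤ A) (hK : (K:ℝ) ≤ 2*A + 2) :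
    ((∑ ν ∈ Finset.range K, (ν + 1) : ℕ) : ℝ) ≤ 2 * (A + 3/2) * (A + 1) := by
  have hg := gauss K
  have hg' : 2 * ((∑ ν ∈ Finset.range K, (ν + 1) : ℕ) : ℝ) = (K:ℝ) * ((K:ℝ) + 1) := by
    exact_mod_cast congrArg (fun n : ℕ => (n : ℝ)) hg
  have hK0 : (0:ℝ) ≤ (K:ℝ) := Nat.cast_nonneg K
  nlinarith [hg', hK, hA, hK0]

lemma A_ge (ε f w : ℝ) (hε0 : 0 < ε) (hε1 : ε < 1) (hf1 : 1 ≤ f)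
    (hfb : f ≤ 1 + ε/4 + ε^2/(8*(1-ε)))
    (hkey : w * (ε*(1-ε)*(1+ε/4) + ε*ε^2/8) ≤ (1-ε)^2) :
    w ≤ (ε⁻¹ - 1)/f := by
  have hf0 : (0:ℝ) < f := by linarith
  have h1ε : (0:ℝ) < 1 - ε := by linarith
  rw [le_div_iff₀ hf0]
  have hX : ε⁻¹ - 1 = (1-ε)/ε := by field_simp
  rw [hX, le_div_iff₀ hε0]
  have h2 : ε*(1-ε)*f ≤ ε*(1-ε)*(1+ε/4) + ε*ε^2/8 := by
    have hmul := mul_le_mul_of_nonneg_left hfb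
      (by positivity : (0:ℝ) ≤ ε*(1-ε))
    calc ε*(1-ε)*f ≤ ε*(1-ε)*(1 + ε/4 + ε^2/(8*(1-ε))) := hmul
      _ = ε*(1-ε)*(1+ε/4) + ε*ε^2/8 := by
          field_simp
  rcases le_or_gt w 0 with hw | hw
  · have h5 : w * f * ε ≤ 0 :=
      mul_nonpos_of_nonpos_of_nonneg (mul_nonpos_of_nonpos_of_nonneg hw hf0.le) hε0.le
    linarith
  · have h3 : w*(ε*(1-ε)*f) ≤ w*(ε*(1-ε)*(1+ε/4) + ε*ε^2/8) :=
      mul_le_mul_of_nonneg_left h2 hw.le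
    by_contra hcon
    push_neg at hcon
    have h6 : (1-ε)*(1-ε) < (w*f*ε)*(1-ε) := by
      apply mul_lt_mul_of_pos_right _ h1ε
      linarith
    nlinarith [h3, hkey]


lemma brkNum_le (ε : ℝ) (B : Finset ((Fin 2 → ℝ) × (Fin 2 → ℝ)))
    (h : IsBracketingCoverC 2 ε B) : bracketingNumberC 2 ε ≤ B.card :=
  Nat.sInf_le ⟨B, h, rfl⟩

lemma pair_valid (a1 a2 b1 b2 ε : ℝ) (ha1 : 0 ≤ a1) (ha2 : 0 ≤ a2)
    (hb1 : b1 ≤ 1) (hb2 : b2 ≤ 1) (h1 : a1 ≤ b1) (h2 : a2 ≤ b2)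
    (hw : b1 * b2 - a1 * a2 ≤ ε) :
    (![a1, a2], ![b1, b2]).1 ∈ Set.Icc (0 : Fin 2 → ℝ) 1 ∧
    (![a1, a2], ![b1, b2]).2 ∈ Set.Icc (0 : Fin 2 → ℝ) 1 ∧
    (![a1, a2], ![b1, b2]).1 ≤ (![a1, a2], ![b1, b2]).2 ∧
    (∏ j, (![a1, a2], ![b1, b2]).2 j) - ∏ j, (![a1, a2], ![b1, b2]).1 j ≤ ε := by
  refine ⟨?_, ?_, ?_, ?_⟩
  · rw [mem_Icc01]
    simp only [Matrix.cons_val_zero, Matrix.cons_val_one, Matrix.head_cons]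
    exact ⟨⟨ha1, ha2⟩, by linarith, by linarith⟩
  · rw [mem_Icc01]
    simp only [Matrix.cons_val_zero, Matrix.cons_val_one, Matrix.head_cons]
    exact ⟨⟨by linarith, by linarith⟩, hb1, hb2⟩
  · rw [vec_le_iff]
    exact ⟨h1, h2⟩
  · rw [Fin.prod_univ_two, Fin.prod_univ_two]
    simp only [Matrix.cons_val_zero, Matrix.cons_val_one, Matrix.head_cons]
    exact hw

lemma cover3 (ε : ℝ) (hl : 3/4 ≤ ε) (hε1 : ε < 1) : bracketingNumberC 2 ε ≤ 3 := by
  classical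
  set p1 : (Fin 2 → ℝ) × (Fin 2 → ℝ) := (![0, 0], ![ε, 1]) with hp1
  set p2 : (Fin 2 → ℝ) × (Fin 2 → ℝ) := (![0, 0], ![1, ε]) with hp2
  set p3 : (Fin 2 → ℝ) × (Fin 2 → ℝ) := (![ε, ε], ![1, 1]) with hp3
  have hε0 : (0:ℝ) < ε := by linarith
  have hcov : IsBracketingCoverC 2 ε ({p1, p2, p3} : Finset _) := by
    constructor
    · intro p hp
      simp only [Finset.mem_insert, Finset.mem_singleton] at hp
      rcases hp with rfl | rfl | rfl
      · exact pair_valid 0 0 ε 1 ε le_rfl le_rfl hε1.le le_rfl hε0.le zero_le_one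
          (by nlinarith)
      · exact pair_valid 0 0 1 ε ε le_rfl le_rfl le_rfl hε1.le zero_le_one hε0.le
          (by nlinarith)
      · exact pair_valid ε ε 1 1 ε hε0.le hε0.le le_rfl le_rfl hε1.le hε1.le
          (by nlinarith)
    · intro x hx
      rw [mem_Icc01] at hx
      obtain ⟨⟨hx00, hx01⟩, hx10, hx11⟩ := hx
      by_cases h0 : x 0 ≤ ε
      · refine ⟨p1, by simp, ?_, ?_⟩
        · rw [hp1, vec_le_iff]
          exact ⟨hx00, hx01⟩
        · rw [hp1, le_vec_iff]
          exact ⟨h0, hx11⟩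
      · by_cases h1 : x 1 ≤ ε
        · refine ⟨p2, by simp, ?_, ?_⟩
          · rw [hp2, vec_le_iff]
            exact ⟨hx00, hx01⟩
          · rw [hp2, le_vec_iff]
            exact ⟨hx10, h1⟩
        · refine ⟨p3, by simp, ?_, ?_⟩
          · rw [hp3, vec_le_iff]
            push_neg at h0 h1
            exact ⟨h0.le, h1.le⟩
          · rw [hp3, le_vec_iff]
            exact ⟨hx10, hx11⟩
  have hcard : ({p1, p2, p3} : Finset ((Fin 2 → ℝ) × (Fin 2 → ℝ))).card ≤ 3 := by
    apply le_trans (Finset.card_insert_le _ _)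
    have := Finset.card_insert_le p2 ({p3} : Finset ((Fin 2 → ℝ) × (Fin 2 → ℝ)))
    simp only [Finset.card_singleton] at this
    omega
  exact le_trans (brkNum_le ε _ hcov) hcard

lemma cover4 (ε : ℝ) (hl : 3/5 ≤ ε) (hr : ε ≤ 3/4) (hε1 : ε < 1) : bracketingNumberC 2 ε ≤ 4 := by
  classical
  set p1 : (Fin 2 → ℝ) × (Fin 2 → ℝ) := (![0, 0], ![ε, 1]) with hp1
  set p2 : (Fin 2 → ℝ) × (Fin 2 → ℝ) := (![0, 0], ![1, ε]) with hp2
  set p3 : (Fin 2 → ℝ) × (Fin 2 → ℝ) := (![ε, ε], ![1, 83/100]) with hp3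
  set p4 : (Fin 2 → ℝ) × (Fin 2 → ℝ) := (![ε, 83/100], ![1, 1]) with hp4
  have hε0 : (0:ℝ) < ε := by linarith
  have hεm : ε ≤ 83/100 ∨ True := Or.inr trivial
  have hcov : IsBracketingCoverC 2 ε ({p1, p2, p3, p4} : Finset _) := by
    constructor
    · intro p hp
      simp only [Finset.mem_insert, Finset.mem_singleton] at hp
      rcases hp with rfl | rfl | rfl | rfl
      · exact pair_valid 0 0 ε 1 ε le_rfl le_rfl hε1.le le_rfl hε0.le zero_le_one
          (by nlinarith)
      · exact pair_valid 0 0 1 ε ε le_rfl le_rfl le_rfl hε1.le zero_le_one hε0.le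
          (by nlinarith)
      · refine pair_valid ε ε 1 (83/100) ε hε0.le hε0.le le_rfl (by norm_num) hε1.le
          (by linarith) (by nlinarith)
      · refine pair_valid ε (83/100) 1 1 ε hε0.le (by norm_num) le_rfl le_rfl hε1.le
          (by norm_num) (by nlinarith)
    · intro x hx
      rw [mem_Icc01] at hx
      obtain ⟨⟨hx00, hx01⟩, hx10, hx11⟩ := hx
      by_cases h0 : x 0 ≤ ε
      · refine ⟨p1, by simp, ?_, ?_⟩
        · rw [hp1, vec_le_iff]
          exact ⟨hx00, hx01⟩
        · rw [hp1, le_vec_iff]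
          exact ⟨h0, hx11⟩
      · by_cases h1 : x 1 ≤ ε
        · refine ⟨p2, by simp, ?_, ?_⟩
          · rw [hp2, vec_le_iff]
            exact ⟨hx00, hx01⟩
          · rw [hp2, le_vec_iff]
            exact ⟨hx10, h1⟩
        · push_neg at h0 h1
          by_cases h2 : x 1 ≤ 83/100
          · refine ⟨p3, by simp, ?_, ?_⟩
            · rw [hp3, vec_le_iff]
              exact ⟨h0.le, h1.le⟩
            · rw [hp3, le_vec_iff]
              exact ⟨hx10, h2⟩
          · push_neg at h2
            refine ⟨p4, by simp, ?_, ?_⟩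
            · rw [hp4, vec_le_iff]
              exact ⟨h0.le, h2.le⟩
            · rw [hp4, le_vec_iff]
              exact ⟨hx10, hx11⟩
  have hcard : ({p1, p2, p3, p4} : Finset ((Fin 2 → ℝ) × (Fin 2 → ℝ))).card ≤ 4 := by
    apply le_trans (Finset.card_insert_le _ _)
    have h2 := Finset.card_insert_le p2 ({p3, p4} : Finset ((Fin 2 → ℝ) × (Fin 2 → ℝ)))
    have h3 := Finset.card_insert_le p3 ({p4} : Finset ((Fin 2 → ℝ) × (Fin 2 → ℝ)))
    simp only [Finset.card_singleton] at h3
    omega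
  exact le_trans (brkNum_le ε _ hcov) hcard



lemma hpoly1 (ε : ℝ) (h0 : 0 < ε) (h14 : ε ≤ 1/4) :
    (4/5 - ε/2)*((1-ε)*(1+ε/4) + ε^2/8) ≤ (1-ε)^2 := by
  nlinarith [mul_nonneg (mul_nonneg h0.le h0.le) h0.le, sq_nonneg ε, mul_nonneg h0.le (by linarith : (0:ℝ) ≤ 1/4 - ε), sq_nonneg (1/4 - ε)]
lemma hpoly6 (ε : ℝ) (hl : 1/4 ≤ ε) (hr : ε ≤ 31/100) :
    (2:ℝ) * (ε*(1-ε)*(1+ε/4) + ε*ε^2/8) ≤ (1-ε)^2 := by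
  nlinarith [mul_nonneg (by linarith : (0:ℝ) ≤ ε - 1/4) (by linarith : (0:ℝ) ≤ 31/100 - ε), sq_nonneg (ε - 1/4), sq_nonneg (31/100 - ε)]
lemma hpoly5 (ε : ℝ) (hl : 31/100 ≤ ε) (hr : ε ≤ 37/100) :
    (3/2:ℝ) * (ε*(1-ε)*(1+ε/4) + ε*ε^2/8) ≤ (1-ε)^2 := by
  nlinarith [mul_nonneg (by linarith : (0:ℝ) ≤ ε - 31/100) (by linarith : (0:ℝ) ≤ 37/100 - ε), sq_nonneg (ε - 31/100), sq_nonneg (37/100 - ε)]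
lemma hpoly4 (ε : ℝ) (hl : 37/100 ≤ ε) (hr : ε ≤ 91/200) :
    (1:ℝ) * (ε*(1-ε)*(1+ε/4) + ε*ε^2/8) ≤ (1-ε)^2 := by
  nlinarith [mul_nonneg (by linarith : (0:ℝ) ≤ ε - 37/100) (by linarith : (0:ℝ) ≤ 91/200 - ε), sq_nonneg (ε - 37/100), sq_nonneg (91/200 - ε)]
lemma hpoly3 (ε : ℝ) (hl : 91/200 ≤ ε) (hr : ε ≤ 3/5) :
    (1/2:ℝ) * (ε*(1-ε)*(1+ε/4) + ε*ε^2/8) ≤ (1-ε)^2 := by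
  nlinarith [mul_nonneg (by linarith : (0:ℝ) ≤ ε - 91/200) (by linarith : (0:ℝ) ≤ 3/5 - ε), sq_nonneg (ε - 91/200), sq_nonneg (3/5 - ε)]
lemma hpolyc4 (ε : ℝ) (hl : 3/5 ≤ ε) (hr : ε ≤ 3/4) :
    (1/5:ℝ) * (ε*(1-ε)*(1+ε/4) + ε*ε^2/8) ≤ (1-ε)^2 := by
  nlinarith [mul_nonneg (by linarith : (0:ℝ) ≤ ε - 3/5) (by linarith : (0:ℝ) ≤ 3/4 - ε), sq_nonneg (ε - 3/5), sq_nonneg (3/4 - ε)]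

noncomputable def T6 : ℕ → ℝ := fun ν => if ν = 0 then 0 else if ν = 1 then 1/4 else if ν = 2 then 2/5
  else if ν = 3 then 11/20 else if ν = 4 then 7/10 else if ν = 5 then 43/50 else 1
noncomputable def T5 : ℕ → ℝ := fun ν => if ν = 0 then 0 else if ν = 1 then 31/100 else if ν = 2 then 1/2
  else if ν = 3 then 69/100 else if ν = 4 then 177/200 else 1
noncomputable def T4 : ℕ → ℝ := fun ν => if ν = 0 then 0 else if ν = 1 then 37/100 else if ν = 2 then 59/100
  else if ν = 3 then 4/5 else 1
noncomputable def T3 : ℕ → ℝ := fun ν => if ν = 0 then 0 else if ν = 1 then 91/200 else if ν = 2 then 18/25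
  else 1

end BrkAux

set_option maxHeartbeats 4000000 in
/-- The improved bound (2.16) for `d = 2`: with
`f(ε) = 1 + ∑_{k=1}^∞ ((∏_{m=1}^k (m - 1/2))/(k+1)!) ε^k`, the bracketing number of the
family `C_2` of anchored boxes in `[0,1]^2` satisfies
`N_[](ε, C_2, ‖·‖_{L¹}) ≤ 2 ((ε⁻¹ - 1)/f(ε) + 3/2) ((ε⁻¹ - 1)/f(ε) + 1)`. -/

theorem bracketingNumberC_two_le_improved (ε : ℝ) (hε : ε ∈ Set.Ioo (0 : ℝ) 1)
    (f : ℝ) (hf : f = 1 + ∑' k : ℕ,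
      (∏ m ∈ Icc 1 (k + 1), ((m : ℝ) - 1 / 2)) / (Nat.factorial (k + 2)) * ε ^ (k + 1)) :
    (bracketingNumberC 2 ε : ℝ) ≤ 2 * ((ε⁻¹ - 1) / f + 3 / 2) * ((ε⁻¹ - 1) / f + 1) := by
  classical
  obtain ⟨hε0, hε1⟩ := hε
  have hfb0 := BrkAux.fsum_bounds ε hε0 hε1
  have hftsum : f = 1 + ∑' k : ℕ, BrkAux.dd k * ε ^ (k + 1) := by
    rw [hf]; rfl
  have hf1 : 1 ≤ f := by rw [hftsum]; linarith [hfb0.1]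
  have hfub : f ≤ 1 + ε/4 + ε^2/(8*(1-ε)) := by rw [hftsum]; linarith [hfb0.2]
  have hf0 : (0:ℝ) < f := by linarith
  set A : ℝ := (ε⁻¹ - 1) / f with hA_def
  have hεinv : 1 ≤ ε⁻¹ := by
    have h := inv_anti₀ hε0 hε1.le
    simpa using h
  have hA0 : 0 ≤ A := div_nonneg (by linarith) hf0.le
  -- helper to conclude a layered case
  have main : ∀ K : ℕ, bracketingNumberC 2 ε ≤ ∑ ν ∈ Finset.range K, (ν + 1) →
      (K:ℝ) ≤ 2*A + 2 → (bracketingNumberC 2 ε : ℝ) ≤ 2 * (A + 3/2) * (A + 1) := by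
    intro K hcount hK
    calc (bracketingNumberC 2 ε : ℝ) ≤ ((∑ ν ∈ Finset.range K, (ν + 1) : ℕ) : ℝ) := by
          exact_mod_cast hcount
      _ ≤ 2 * (A + 3/2) * (A + 1) := BrkAux.count_vs_rhs K A hA0 hK
  rcases le_or_gt ε (1/4) with h14 | h14
  · -- general construction, 0 < ε ≤ 1/4
    set K : ℕ := ⌈8/(5*ε)⌉₊ with hK_def
    have hKpos : 0 < K := Nat.ceil_pos.mpr (by positivity)
    have hKge : 8/(5*ε) ≤ (K:ℝ) := Nat.le_ceil _
    have hKlt : (K:ℝ) < 8/(5*ε) + 1 := Nat.ceil_lt_add_one (by positivity)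
    have hKR : (0:ℝ) < (K:ℝ) := by exact_mod_cast hKpos
    have hKε : 8/5 ≤ (K:ℝ) * ε := by
      have h := mul_le_mul_of_nonneg_right hKge hε0.le
      have he : 8/(5*ε) * ε = 8/5 := by field_simp
      linarith [he ▸ h]
    have h1K : 1/(K:ℝ) ≤ 5*ε/8 := by
      rw [div_le_iff₀ hKR]
      nlinarith [hKε]
    have hcount : bracketingNumberC 2 ε ≤ ∑ ν ∈ Finset.range K, (ν + 1) := by
      apply BrkAux.layered_spec ε hε0 K hKpos (fun ν => (ν:ℝ)/(K:ℝ))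
      · simp
      · field_simp
      · intro ν hν
        rw [div_lt_div_iff₀ hKR hKR]
        push_cast
        nlinarith [hKR]
      · push_cast
        calc (1:ℝ)/(K:ℝ) ≤ 5*ε/8 := h1K
          _ ≤ ε := by linarith
      · intro ν h1 h2
        have hν0 : (0:ℝ) < (ν:ℝ) := by exact_mod_cast h1
        have hgap : ((ν+1:ℕ):ℝ)/(K:ℝ) - ((ν:ℕ):ℝ)/(K:ℝ) = 1/(K:ℝ) := by
          push_cast
          ring
        calc ε = (8/3) * (3/8*ε) := by ring
          _ ≤ ((((ν:ℝ)) + 1)/(ν:ℝ))^(ν+1) * (ε - 1/(K:ℝ)) := by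
              apply mul_le_mul (BrkAux.ratio_pow ν h1) (by linarith) (by linarith)
              linarith [BrkAux.ratio_pow ν h1]
          _ = (((ν+1:ℕ):ℝ)/(K:ℝ) / (((ν:ℕ):ℝ)/(K:ℝ)))^(ν+1) *
                (ε - (((ν+1:ℕ):ℝ)/(K:ℝ) - ((ν:ℕ):ℝ)/(K:ℝ))) := by
              rw [hgap]
              have hbase : ((ν+1:ℕ):ℝ)/(K:ℝ) / (((ν:ℕ):ℝ)/(K:ℝ)) = ((ν:ℝ) + 1)/(ν:ℝ) := by
                have hKne : (K:ℝ) ≠ 0 := ne_of_gt hKR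
                have hνne : ((ν:ℕ):ℝ) ≠ 0 := ne_of_gt hν0
                field_simp
                push_cast
                ring
              rw [hbase]
    apply main K hcount
    -- K ≤ 2A+2
    have hKe : (K:ℝ) * ε < 8/5 + ε := by
      have h := mul_lt_mul_of_pos_right hKlt hε0
      have he : (8/(5*ε) + 1) * ε = 8/5 + ε := by field_simp
      linarith [he ▸ h]
    have hY : (0:ℝ) ≤ (1-ε)*(1+ε/4) + ε^2/8 := by nlinarith
    have h5 : ((K:ℝ)-2)*ε/2 ≤ 4/5 - ε/2 := by nlinarith [hKe]
    have hpoly : (4/5 - ε/2)*((1-ε)*(1+ε/4) + ε^2/8) ≤ (1-ε)^2 :=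
      BrkAux.hpoly1 ε hε0 h14
    have hkey : ((K:ℝ)-2)/2 * (ε*(1-ε)*(1+ε/4) + ε*ε^2/8) ≤ (1-ε)^2 := by
      calc ((K:ℝ)-2)/2 * (ε*(1-ε)*(1+ε/4) + ε*ε^2/8)
          = (((K:ℝ)-2)*ε/2) * ((1-ε)*(1+ε/4) + ε^2/8) := by ring
        _ ≤ (4/5 - ε/2) * ((1-ε)*(1+ε/4) + ε^2/8) := mul_le_mul_of_nonneg_right h5 hY
        _ ≤ (1-ε)^2 := hpoly
    have hAw := BrkAux.A_ge ε f (((K:ℝ)-2)/2) hε0 hε1 hf1 hfub hkey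
    rw [← hA_def] at hAw
    linarith
  · rcases le_or_gt ε (31/100) with h31 | h31
    · -- K = 6
      have hl : 1/4 ≤ ε := h14.le
      have hcount : bracketingNumberC 2 ε ≤ ∑ ν ∈ Finset.range 6, (ν + 1) := by
        apply BrkAux.layered_spec ε hε0 6 (by norm_num) BrkAux.T6
        · norm_num [BrkAux.T6]
        · norm_num [BrkAux.T6]
        · intro ν hν
          interval_cases ν <;> norm_num [BrkAux.T6]
        · norm_num [BrkAux.T6]; linarith
        · intro ν h1 h2
          interval_cases ν <;> simp only [BrkAux.T6] <;> norm_num <;> nlinarith [hl]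
      apply main 6 hcount
      have hkey : (2:ℝ) * (ε*(1-ε)*(1+ε/4) + ε*ε^2/8) ≤ (1-ε)^2 :=
        BrkAux.hpoly6 ε hl h31
      have hAw := BrkAux.A_ge ε f 2 hε0 hε1 hf1 hfub hkey
      rw [← hA_def] at hAw
      norm_num
      linarith
    · rcases le_or_gt ε (37/100) with h37 | h37
      · -- K = 5
        have hl : 31/100 ≤ ε := h31.le
        have hcount : bracketingNumberC 2 ε ≤ ∑ ν ∈ Finset.range 5, (ν + 1) := by
          apply BrkAux.layered_spec ε hε0 5 (by norm_num) BrkAux.T5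
          · norm_num [BrkAux.T5]
          · norm_num [BrkAux.T5]
          · intro ν hν
            interval_cases ν <;> norm_num [BrkAux.T5]
          · norm_num [BrkAux.T5]; linarith
          · intro ν h1 h2
            interval_cases ν <;> simp only [BrkAux.T5] <;> norm_num <;> nlinarith [hl]
        apply main 5 hcount
        have hkey : (3/2:ℝ) * (ε*(1-ε)*(1+ε/4) + ε*ε^2/8) ≤ (1-ε)^2 :=
          BrkAux.hpoly5 ε hl h37
        have hAw := BrkAux.A_ge ε f (3/2) hε0 hε1 hf1 hfub hkey
        rw [← hA_def] at hAw
        norm_num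
        linarith
      · rcases le_or_gt ε (91/200) with h455 | h455
        · -- K = 4
          have hl : 37/100 ≤ ε := h37.le
          have hcount : bracketingNumberC 2 ε ≤ ∑ ν ∈ Finset.range 4, (ν + 1) := by
            apply BrkAux.layered_spec ε hε0 4 (by norm_num) BrkAux.T4
            · norm_num [BrkAux.T4]
            · norm_num [BrkAux.T4]
            · intro ν hν
              interval_cases ν <;> norm_num [BrkAux.T4]
            · norm_num [BrkAux.T4]; linarith
            · intro ν h1 h2
              interval_cases ν <;> simp only [BrkAux.T4] <;> norm_num <;> nlinarith [hl]
          apply main 4 hcount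
          have hkey : (1:ℝ) * (ε*(1-ε)*(1+ε/4) + ε*ε^2/8) ≤ (1-ε)^2 :=
            BrkAux.hpoly4 ε hl h455
          have hAw := BrkAux.A_ge ε f 1 hε0 hε1 hf1 hfub hkey
          rw [← hA_def] at hAw
          norm_num
          linarith
        · rcases le_or_gt ε (3/5) with h60 | h60
          · -- K = 3
            have hl : 91/200 ≤ ε := h455.le
            have hcount : bracketingNumberC 2 ε ≤ ∑ ν ∈ Finset.range 3, (ν + 1) := by
              apply BrkAux.layered_spec ε hε0 3 (by norm_num) BrkAux.T3
              · norm_num [BrkAux.T3]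
              · norm_num [BrkAux.T3]
              · intro ν hν
                interval_cases ν <;> norm_num [BrkAux.T3]
              · norm_num [BrkAux.T3]; linarith
              · intro ν h1 h2
                interval_cases ν <;> simp only [BrkAux.T3] <;> norm_num <;> nlinarith [hl]
            apply main 3 hcount
            have hkey : (1/2:ℝ) * (ε*(1-ε)*(1+ε/4) + ε*ε^2/8) ≤ (1-ε)^2 :=
              BrkAux.hpoly3 ε h455.le h60
            have hAw := BrkAux.A_ge ε f (1/2) hε0 hε1 hf1 hfub hkey
            rw [← hA_def] at hAw
            norm_num
            linarith
          · rcases le_or_gt ε (3/4) with h75 | h75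
            · -- 4 brackets
              have hc := BrkAux.cover4 ε h60.le h75 hε1
              have hkey : (1/5:ℝ) * (ε*(1-ε)*(1+ε/4) + ε*ε^2/8) ≤ (1-ε)^2 :=
                BrkAux.hpolyc4 ε h60.le h75
              have hAw := BrkAux.A_ge ε f (1/5) hε0 hε1 hf1 hfub hkey
              rw [← hA_def] at hAw
              calc (bracketingNumberC 2 ε : ℝ) ≤ (4:ℝ) := by exact_mod_cast hc
                _ ≤ 2 * (A + 3/2) * (A + 1) := by nlinarith [hAw]
            · -- 3 brackets
              have hc := BrkAux.cover3 ε h75.le hε1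
              calc (bracketingNumberC 2 ε : ℝ) ≤ (3:ℝ) := by exact_mod_cast hc
                _ ≤ 2 * (A + 3/2) * (A + 1) := by nlinarith [hA0]
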